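/- For every complex number z with Re(z) > 1, the Riemann zeta function satisfies ζ(z) = 1 + ∑_{r ∈ S} ( cosh(z·log r/2)/(2·sinh(z·log r/2)) − 1/2 ), where S is the set of integers r ≥ 2 that are not perfect powers. -/

import Mathlib

/-- The set of integers `r ≥ 2` that are not perfect powers, i.e. not of the form
`a ^ k` with `a ≥ 2` and `k ≥ 2`. -/
def nonPerfectPowers : Set ℕ :=
  {r | 2 ≤ r ∧ ¬ ∃ a k : ℕ, 2 ≤ a ∧ 2 ≤ k ∧ a ^ k = r}

lemma exists_pow_of_dvd_factorization {n d : ℕ} (hn : n ≠ 0) (h : ∀ p, d ∣ n.factorization p) :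
    ∃ m, m ^ d = n := by
  refine ⟨n.factorization.prod fun p e => p ^ (e / d), ?_⟩
  rw [Finsupp.prod, ← Finset.prod_pow]
  conv_rhs => rw [← Nat.factorization_prod_pow_eq_self hn]
  rw [Finsupp.prod]
  refine Finset.prod_congr rfl fun p _ => ?_
  rw [← pow_mul, Nat.div_mul_cancel (h p)]

lemma npp_unique {r s k m : ℕ} (hr : r ∈ nonPerfectPowers) (hs : s ∈ nonPerfectPowers)
    (hk : 1 ≤ k) (hm : 1 ≤ m) (h : r ^ k = s ^ m) : r = s ∧ k = m := by
  obtain ⟨hr2, hrn⟩ := hr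
  obtain ⟨hs2, hsn⟩ := hs
  have hr0 : r ≠ 0 := by omega
  have hs0 : s ≠ 0 := by omega
  have hfac : ∀ p, k * r.factorization p = m * s.factorization p := by
    intro p
    have := congrArg (fun n => n.factorization p) h
    simpa [Nat.factorization_pow] using this
  set d := Nat.gcd k m with hd
  have hd0 : 0 < d := Nat.gcd_pos_of_pos_left m (by omega)
  set k' := k / d with hk'def
  set m' := m / d with hm'def
  have hk' : d * k' = k := Nat.mul_div_cancel' (Nat.gcd_dvd_left k m)
  have hm' : d * m' = m := Nat.mul_div_cancel' (Nat.gcd_dvd_right k m)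
  have hcop : Nat.Coprime k' m' := Nat.coprime_div_gcd_div_gcd hd0
  have hk'0 : k' ≠ 0 := by rintro h0; rw [h0] at hk'; omega
  have hm'0 : m' ≠ 0 := by rintro h0; rw [h0] at hm'; omega
  have hfac' : ∀ p, k' * r.factorization p = m' * s.factorization p := by
    intro p
    have h1 := hfac p
    rw [← hk', ← hm', mul_assoc, mul_assoc] at h1
    exact Nat.eq_of_mul_eq_mul_left hd0 h1
  have hm'dvd : ∀ p, m' ∣ r.factorization p := by
    intro p
    have : m' ∣ k' * r.factorization p := ⟨s.factorization p, hfac' p⟩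
    exact Nat.Coprime.dvd_of_dvd_mul_left hcop.symm this
  have hk'dvd : ∀ p, k' ∣ s.factorization p := by
    intro p
    have : k' ∣ m' * s.factorization p := ⟨r.factorization p, (hfac' p).symm⟩
    exact Nat.Coprime.dvd_of_dvd_mul_left hcop this
  have hm'1 : m' = 1 := by
    by_contra hne
    obtain ⟨t, ht⟩ := exists_pow_of_dvd_factorization hr0 hm'dvd
    have ht2 : 2 ≤ t := by
      by_contra h2
      push_neg at h2
      interval_cases t
      · rw [zero_pow hm'0] at ht; omega
      · rw [one_pow] at ht; omega
    exact hrn ⟨t, m', ht2, (Nat.two_le_iff m').mpr ⟨hm'0, hne⟩, ht⟩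
  have hk'1 : k' = 1 := by
    by_contra hne
    obtain ⟨t, ht⟩ := exists_pow_of_dvd_factorization hs0 hk'dvd
    have ht2 : 2 ≤ t := by
      by_contra h2
      push_neg at h2
      interval_cases t
      · rw [zero_pow hk'0] at ht; omega
      · rw [one_pow] at ht; omega
    exact hsn ⟨t, k', ht2, (Nat.two_le_iff k').mpr ⟨hk'0, hne⟩, ht⟩
  have hkm : k = m := by rw [← hk', ← hm', hk'1, hm'1]
  subst hkm
  exact ⟨Nat.pow_left_injective (by omega) h, rfl⟩

lemma npp_exists : ∀ n : ℕ, 2 ≤ n → ∃ r k : ℕ, r ∈ nonPerfectPowers ∧ 1 ≤ k ∧ r ^ k = n := by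
  intro n
  induction n using Nat.strong_induction_on with
  | _ n ih =>
    intro hn
    by_cases h : ∃ a k : ℕ, 2 ≤ a ∧ 2 ≤ k ∧ a ^ k = n
    · obtain ⟨a, k, ha, hk, hak⟩ := h
      have halt : a < n := by
        calc a < a ^ 2 := by nlinarith
        _ ≤ a ^ k := Nat.pow_le_pow_right (by omega) hk
        _ = n := by omega
      obtain ⟨r, j, hr, hj, hrj⟩ := ih a halt ha
      exact ⟨r, j * k, hr, Nat.mul_pos hj (by omega), by rw [pow_mul, hrj, hak]⟩
    · exact ⟨n, 1, ⟨hn, h⟩, le_refl 1, pow_one n⟩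
lemma coth_term (z : ℂ) (hz : 1 < z.re) {r : ℕ} (hr : 2 ≤ r) :
    Complex.cosh (z * Real.log r / 2) / (2 * Complex.sinh (z * Real.log r / 2)) - 1 / 2
      = ∑' k : ℕ, 1 / ((r : ℂ) ^ (k + 1)) ^ z := by
  have hr1 : (1 : ℝ) < (r : ℝ) := by exact_mod_cast hr.trans_lt' one_lt_two
  have hlr : 0 < Real.log r := Real.log_pos hr1
  set w : ℂ := z * Real.log r / 2 with hw
  set u : ℂ := Complex.exp w with huu
  have hu : u ≠ 0 := Complex.exp_ne_zero w
  set x : ℂ := Complex.exp (-(z * Real.log r)) with hxx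
  have hx : x = (u ^ 2)⁻¹ := by
    rw [hxx, huu, ← Complex.exp_nat_mul, ← Complex.exp_neg]
    congr 1
    rw [hw]; push_cast; ring
  have hxnorm : ‖x‖ < 1 := by
    rw [hxx, Complex.norm_exp]
    have hre : (-(z * (Real.log r : ℂ))).re = -(z.re * Real.log r) := by
      simp only [Complex.neg_re, Complex.mul_re, Complex.ofReal_re, Complex.ofReal_im,
        mul_zero, sub_zero]
    rw [hre]
    have : 0 < z.re * Real.log r := by nlinarith
    calc Real.exp (-(z.re * Real.log r)) < Real.exp 0 := Real.exp_lt_exp.mpr (by linarith)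
      _ = 1 := Real.exp_zero
  have hx1 : x ≠ 1 := by
    intro h1; rw [h1] at hxnorm; simp at hxnorm
  have hterm : ∀ k : ℕ, 1 / ((r : ℂ) ^ (k + 1)) ^ z = x ^ (k + 1) := by
    intro k
    have hb : ((r : ℂ)) ^ (k + 1) ≠ 0 :=
      pow_ne_zero _ (Nat.cast_ne_zero.mpr (by omega))
    have hlog : Complex.log ((r : ℂ) ^ (k + 1)) = (((k : ℂ) + 1)) * (Real.log r : ℂ) := by
      rw [← Nat.cast_pow, ← Complex.natCast_log, Nat.cast_pow, Real.log_pow]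
      push_cast; ring
    rw [Complex.cpow_def_of_ne_zero hb, hlog, one_div, ← Complex.exp_neg]
    rw [hxx, ← Complex.exp_nat_mul]
    congr 1
    push_cast; ring
  rw [tsum_congr hterm]
  have hgeom : ∑' k : ℕ, x ^ (k + 1) = x * (1 - x)⁻¹ := by
    have : ∀ k : ℕ, x ^ (k + 1) = x * x ^ k := fun k => by rw [pow_succ]; ring
    rw [tsum_congr this, tsum_mul_left, tsum_geometric_of_norm_lt_one hxnorm]
  rw [hgeom]
  -- now the algebraic identity
  have hu2 : u ^ 2 ≠ 1 := by
    intro h1; apply hx1; rw [hx, h1, inv_one]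
  have hsub : u - u⁻¹ ≠ 0 := by
    intro h0
    apply hu2
    have : u * (u - u⁻¹) = 0 := by rw [h0, mul_zero]
    rw [mul_sub, mul_inv_cancel₀ hu] at this
    have : u * u = 1 := by linear_combination this
    rw [sq]; exact this
  have h1x : (1 : ℂ) - x ≠ 0 := sub_ne_zero.mpr (fun h => hx1 h.symm)
  have hcosh : Complex.cosh w = (u + u⁻¹) / 2 := by
    rw [eq_div_iff (two_ne_zero' ℂ), mul_comm, Complex.two_cosh, Complex.exp_neg]
  have hsinh : Complex.sinh w = (u - u⁻¹) / 2 := by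
    rw [eq_div_iff (two_ne_zero' ℂ), mul_comm, Complex.two_sinh, Complex.exp_neg]
  rw [hcosh, hsinh, hx]
  rw [hx] at h1x
  have hu21 : u ^ 2 - 1 ≠ 0 := sub_ne_zero.mpr hu2
  have h2' : (-2 : ℂ) + u ^ 2 * 2 ≠ 0 := fun h0 => hu21 (by linear_combination h0 / 2)
  field_simp [hu21, h2']
  ring

noncomputable def powEquiv : nonPerfectPowers × ℕ ≃ {n : ℕ // 2 ≤ n} :=
  Equiv.ofBijective
    (fun p => ⟨(p.1 : ℕ) ^ (p.2 + 1),
      le_trans p.1.2.1 (Nat.le_self_pow (Nat.succ_ne_zero _) _)⟩)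
    ⟨by
      rintro ⟨r, k⟩ ⟨s, m⟩ hpq
      have h : (r : ℕ) ^ (k + 1) = (s : ℕ) ^ (m + 1) := congrArg Subtype.val hpq
      obtain ⟨h1, h2⟩ := npp_unique r.2 s.2 (Nat.succ_le_succ (Nat.zero_le _))
        (Nat.succ_le_succ (Nat.zero_le _)) h
      exact Prod.ext (Subtype.ext h1) (by omega),
     by
      rintro ⟨n, hn⟩
      obtain ⟨r, k, hr, hk, hrk⟩ := npp_exists n hn
      refine ⟨(⟨r, hr⟩, k - 1), Subtype.ext ?_⟩
      show r ^ (k - 1 + 1) = n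
      rw [Nat.sub_add_cancel hk]; exact hrk⟩

def shift2 : ℕ ≃ {n : ℕ // 2 ≤ n} where
  toFun n := ⟨n + 2, by omega⟩
  invFun m := (m : ℕ) - 2
  left_inv n := by simp
  right_inv m := Subtype.ext (by have := m.2; simp; omega)

theorem riemannZeta_eq_one_add_tsum_coth
    (z : ℂ) (hz : 1 < z.re) :
    riemannZeta z = 1 + ∑' r : nonPerfectPowers,
      (Complex.cosh (z * Real.log (r : ℕ) / 2) /
        (2 * Complex.sinh (z * Real.log (r : ℕ) / 2)) - 1 / 2) := by
  have hz0 : z ≠ 0 := by intro h; rw [h] at hz; norm_num [Complex.zero_re] at hz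
  have hsum : Summable (fun n : ℕ => 1 / (n : ℂ) ^ z) :=
    Complex.summable_one_div_nat_cpow.mpr hz
  set f : ℕ → ℂ := fun n => 1 / (n : ℂ) ^ z with hf
  have hF : Summable (fun m : {n : ℕ // 2 ≤ n} => f (m : ℕ)) := hsum.subtype _
  have hG : Summable (fun p : nonPerfectPowers × ℕ => f ((powEquiv p : ℕ))) :=
    (powEquiv.summable_iff).mpr hF
  calc riemannZeta z = ∑' n : ℕ, f n := zeta_eq_tsum_one_div_nat_cpow hz
    _ = f 0 + ∑' n : ℕ, f (n + 1) := Summable.tsum_eq_zero_add hsum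
    _ = f 0 + (f (0 + 1) + ∑' n : ℕ, f (n + 1 + 1)) := by
        rw [Summable.tsum_eq_zero_add ((summable_nat_add_iff 1).mpr hsum)]
    _ = 1 + ∑' n : ℕ, f (n + 1 + 1) := by
        have h0 : f 0 = 0 := by simp [hf, Complex.zero_cpow hz0]
        have h1 : f (0 + 1) = 1 := by simp [hf]
        rw [h0, h1, zero_add]
    _ = 1 + ∑' m : {n : ℕ // 2 ≤ n}, f (m : ℕ) := by
        rw [← shift2.tsum_eq (fun m : {n : ℕ // 2 ≤ n} => f (m : ℕ))]
        rfl
    _ = 1 + ∑' p : nonPerfectPowers × ℕ, f ((powEquiv p : ℕ)) := by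
        rw [powEquiv.tsum_eq (fun m : {n : ℕ // 2 ≤ n} => f (m : ℕ))]
    _ = 1 + ∑' r : nonPerfectPowers, ∑' k : ℕ, f ((r : ℕ) ^ (k + 1)) := by
        rw [Summable.tsum_prod hG]
        rfl
    _ = 1 + ∑' r : nonPerfectPowers,
          (Complex.cosh (z * Real.log (r : ℕ) / 2) /
            (2 * Complex.sinh (z * Real.log (r : ℕ) / 2)) - 1 / 2) := by
        congr 1
        refine tsum_congr fun r => ?_
        rw [coth_term z hz r.2.1]
        refine tsum_congr fun k => ?_
        simp only [hf]
        norm_cast
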